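/- For every n ≥ 1 there exists a set of clauses with 4n clauses over 3n variables that has exactly 2ⁿ distinct IES's. Specifically, Π_n = ⋃_{i=1}^n { a_i ∨ ¬b_i, ¬a_i ∨ b_i, a_i ∨ c_i, b_i ∨ c_i } has 2ⁿ IES's, obtained by choosing for each i whether to delete a_i ∨ c_i or b_i ∨ c_i. -/

import Mathlib

open scoped Classical

abbrev Clause := Finset (ℕ × Bool)
abbrev Assignment := ℕ → Bool

/-- An assignment satisfies a clause iff it makes some literal true. -/
def satC (ω : Assignment) (c : Clause) : Prop := ∃ l ∈ c, ω l.1 = l.2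

/-- An assignment satisfies a CNF (finite set of clauses). -/
def satF (ω : Assignment) (P : Finset Clause) : Prop := ∀ c ∈ P, satC ω c

/-- A CNF entails a clause. -/
def entails (P : Finset Clause) (γ : Clause) : Prop := ∀ ω, satF ω P → satC ω γ

/-- Two CNFs are (logically) equivalent: same models. -/
def equivF (P Q : Finset Clause) : Prop := ∀ ω, satF ω P ↔ satF ω Q

/-- A clause is non-tautological. -/
def nonTaut (c : Clause) : Prop := ∀ v, ¬((v, true) ∈ c ∧ (v, false) ∈ c)

/-- A CNF is redundant: it is equivalent to a proper subset. -/
def redundantF (P : Finset Clause) : Prop := ∃ Q ⊂ P, equivF Q P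

/-- A CNF is irredundant: no clause is entailed by the others. -/
def irredundant (P : Finset Clause) : Prop := ∀ γ ∈ P, ¬ entails (P.erase γ) γ

/-- Q is an irredundant equivalent subset (IES) of P. -/
def IES (P Q : Finset Clause) : Prop := Q ⊆ P ∧ equivF Q P ∧ irredundant Q

/-- The clause a_i ∨ ¬b_i, with a_i = 3i, b_i = 3i+1, c_i = 3i+2. -/
def abC (i : ℕ) : Clause := {(3*i, true), (3*i+1, false)}
/-- The clause ¬a_i ∨ b_i. -/
def baC (i : ℕ) : Clause := {(3*i, false), (3*i+1, true)}
/-- The clause a_i ∨ c_i. -/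
def acC (i : ℕ) : Clause := {(3*i, true), (3*i+2, true)}
/-- The clause b_i ∨ c_i. -/
def bcC (i : ℕ) : Clause := {(3*i+1, true), (3*i+2, true)}

/-- Π_n = ⋃_{i<n} { a_i ∨ ¬b_i, ¬a_i ∨ b_i, a_i ∨ c_i, b_i ∨ c_i }. -/
def PiN (n : ℕ) : Finset Clause :=
  (Finset.range n).biUnion fun i => {abC i, baC i, acC i, bcC i}

/-- The subset of Π_n obtained by deleting, for each i, either a_i ∨ c_i or b_i ∨ c_i
according to the choice function f. -/
def delSet (n : ℕ) (f : Fin n → Bool) : Finset Clause :=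
  PiN n \ (Finset.univ.image fun i : Fin n => if f i then acC i.1 else bcC i.1)

section Aux

lemma mem_abC {p : ℕ × Bool} {i : ℕ} : p ∈ abC i ↔ p = (3*i, true) ∨ p = (3*i+1, false) := by
  simp [abC]
lemma mem_baC {p : ℕ × Bool} {i : ℕ} : p ∈ baC i ↔ p = (3*i, false) ∨ p = (3*i+1, true) := by
  simp [baC]
lemma mem_acC {p : ℕ × Bool} {i : ℕ} : p ∈ acC i ↔ p = (3*i, true) ∨ p = (3*i+2, true) := by
  simp [acC]
lemma mem_bcC {p : ℕ × Bool} {i : ℕ} : p ∈ bcC i ↔ p = (3*i+1, true) ∨ p = (3*i+2, true) := by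
  simp [bcC]

lemma satC_abC {ω : Assignment} {i : ℕ} :
    satC ω (abC i) ↔ ω (3*i) = true ∨ ω (3*i+1) = false := by simp [satC, abC]
lemma satC_baC {ω : Assignment} {i : ℕ} :
    satC ω (baC i) ↔ ω (3*i) = false ∨ ω (3*i+1) = true := by simp [satC, baC]
lemma satC_acC {ω : Assignment} {i : ℕ} :
    satC ω (acC i) ↔ ω (3*i) = true ∨ ω (3*i+2) = true := by simp [satC, acC]
lemma satC_bcC {ω : Assignment} {i : ℕ} :
    satC ω (bcC i) ↔ ω (3*i+1) = true ∨ ω (3*i+2) = true := by simp [satC, bcC]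

-- distinctness
lemma abC_ne_baC {i j : ℕ} : abC i ≠ baC j := by
  intro h
  have h1 : ((3*i : ℕ), true) ∈ baC j := h ▸ mem_abC.mpr (Or.inl rfl)
  rcases mem_baC.mp h1 with h2 | h2 <;> rw [Prod.ext_iff] at h2 <;> simp at h2 <;> omega
lemma abC_ne_acC {i j : ℕ} : abC i ≠ acC j := by
  intro h
  have h1 : ((3*i+1 : ℕ), false) ∈ acC j := h ▸ mem_abC.mpr (Or.inr rfl)
  rcases mem_acC.mp h1 with h2 | h2 <;> rw [Prod.ext_iff] at h2 <;> simp at h2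
lemma abC_ne_bcC {i j : ℕ} : abC i ≠ bcC j := by
  intro h
  have h1 : ((3*i+1 : ℕ), false) ∈ bcC j := h ▸ mem_abC.mpr (Or.inr rfl)
  rcases mem_bcC.mp h1 with h2 | h2 <;> rw [Prod.ext_iff] at h2 <;> simp at h2
lemma baC_ne_acC {i j : ℕ} : baC i ≠ acC j := by
  intro h
  have h1 : ((3*i : ℕ), false) ∈ acC j := h ▸ mem_baC.mpr (Or.inl rfl)
  rcases mem_acC.mp h1 with h2 | h2 <;> rw [Prod.ext_iff] at h2 <;> simp at h2
lemma baC_ne_bcC {i j : ℕ} : baC i ≠ bcC j := by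
  intro h
  have h1 : ((3*i : ℕ), false) ∈ bcC j := h ▸ mem_baC.mpr (Or.inl rfl)
  rcases mem_bcC.mp h1 with h2 | h2 <;> rw [Prod.ext_iff] at h2 <;> simp at h2
lemma acC_ne_bcC {i j : ℕ} : acC i ≠ bcC j := by
  intro h
  have h1 : ((3*i : ℕ), true) ∈ bcC j := h ▸ mem_acC.mpr (Or.inl rfl)
  rcases mem_bcC.mp h1 with h2 | h2 <;> rw [Prod.ext_iff] at h2 <;> simp at h2 <;> omega

lemma acC_inj {i j : ℕ} (h : acC i = acC j) : i = j := by
  have h1 : ((3*i : ℕ), true) ∈ acC j := h ▸ mem_acC.mpr (Or.inl rfl)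
  rcases mem_acC.mp h1 with h2 | h2 <;> rw [Prod.ext_iff] at h2 <;> simp at h2 <;> omega
lemma bcC_inj {i j : ℕ} (h : bcC i = bcC j) : i = j := by
  have h1 : ((3*i+1 : ℕ), true) ∈ bcC j := h ▸ mem_bcC.mpr (Or.inl rfl)
  rcases mem_bcC.mp h1 with h2 | h2 <;> rw [Prod.ext_iff] at h2 <;> simp at h2 <;> omega

lemma mem_PiN {c : Clause} {n : ℕ} :
    c ∈ PiN n ↔ ∃ i < n, c = abC i ∨ c = baC i ∨ c = acC i ∨ c = bcC i := by simp [PiN]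

-- the assignment builder
def asg (i : ℕ) (pa pb pc : Bool) : Assignment :=
  fun v => if v = 3*i then pa else if v = 3*i+1 then pb else if v = 3*i+2 then pc else true

lemma asg_a {i pa pb pc} : asg i pa pb pc (3*i) = pa := by unfold asg; rw [if_pos rfl]
lemma asg_b {i pa pb pc} : asg i pa pb pc (3*i+1) = pb := by
  unfold asg; rw [if_neg (by omega), if_pos rfl]
lemma asg_c {i pa pb pc} : asg i pa pb pc (3*i+2) = pc := by
  unfold asg; rw [if_neg (by omega), if_neg (by omega), if_pos rfl]
lemma asg_other {i pa pb pc v} (h1 : v ≠ 3*i) (h2 : v ≠ 3*i+1) (h3 : v ≠ 3*i+2) :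
    asg i pa pb pc v = true := by
  unfold asg; rw [if_neg h1, if_neg h2, if_neg h3]

lemma asg_sat_block {i j : ℕ} {pa pb pc : Bool} (hij : j ≠ i) {c : Clause}
    (hc : c = abC j ∨ c = baC j ∨ c = acC j ∨ c = bcC j) : satC (asg i pa pb pc) c := by
  have h0 : asg i pa pb pc (3*j) = true := asg_other (by omega) (by omega) (by omega)
  have h1 : asg i pa pb pc (3*j+1) = true := asg_other (by omega) (by omega) (by omega)
  rcases hc with rfl | rfl | rfl | rfl
  · exact satC_abC.mpr (Or.inl h0)
  · exact satC_baC.mpr (Or.inr h1)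
  · exact satC_acC.mpr (Or.inl h0)
  · exact satC_bcC.mpr (Or.inl h1)

lemma satF_of_pattern {n i : ℕ} {pa pb pc : Bool} {Q : Finset Clause} (hQ : Q ⊆ PiN n)
    (hab : abC i ∈ Q → pa = true ∨ pb = false)
    (hba : baC i ∈ Q → pa = false ∨ pb = true)
    (hac : acC i ∈ Q → pa = true ∨ pc = true)
    (hbc : bcC i ∈ Q → pb = true ∨ pc = true) :
    satF (asg i pa pb pc) Q := by
  intro c hc
  rcases mem_PiN.mp (hQ hc) with ⟨j, _, hcases⟩
  by_cases hji : j = i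
  · subst hji
    rcases hcases with rfl | rfl | rfl | rfl
    · rcases hab hc with h | h
      · exact satC_abC.mpr (Or.inl (asg_a.trans h))
      · exact satC_abC.mpr (Or.inr (asg_b.trans h))
    · rcases hba hc with h | h
      · exact satC_baC.mpr (Or.inl (asg_a.trans h))
      · exact satC_baC.mpr (Or.inr (asg_b.trans h))
    · rcases hac hc with h | h
      · exact satC_acC.mpr (Or.inl (asg_a.trans h))
      · exact satC_acC.mpr (Or.inr (asg_c.trans h))
    · rcases hbc hc with h | h
      · exact satC_bcC.mpr (Or.inl (asg_b.trans h))
      · exact satC_bcC.mpr (Or.inr (asg_c.trans h))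
  · exact asg_sat_block hji hcases

lemma eq_of_ab_ba {ω : Assignment} {i : ℕ} (h1 : satC ω (abC i)) (h2 : satC ω (baC i)) :
    ω (3*i) = ω (3*i+1) := by
  rw [satC_abC] at h1; rw [satC_baC] at h2
  rcases h1 with h1 | h1 <;> rcases h2 with h2 | h2 <;> simp_all

end Aux

section Aux2

lemma block_vars {c : Clause} {i : ℕ}
    (h : c = abC i ∨ c = baC i ∨ c = acC i ∨ c = bcC i) :
    c.Nonempty ∧ ∀ p ∈ c, 3*i ≤ p.1 ∧ p.1 ≤ 3*i+2 := by
  rcases h with rfl | rfl | rfl | rfl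
  · exact ⟨⟨_, mem_abC.mpr (Or.inl rfl)⟩, by rintro p hp; rcases mem_abC.mp hp with rfl | rfl <;> simp <;> omega⟩
  · exact ⟨⟨_, mem_baC.mpr (Or.inl rfl)⟩, by rintro p hp; rcases mem_baC.mp hp with rfl | rfl <;> simp <;> omega⟩
  · exact ⟨⟨_, mem_acC.mpr (Or.inl rfl)⟩, by rintro p hp; rcases mem_acC.mp hp with rfl | rfl <;> simp <;> omega⟩
  · exact ⟨⟨_, mem_bcC.mpr (Or.inl rfl)⟩, by rintro p hp; rcases mem_bcC.mp hp with rfl | rfl <;> simp <;> omega⟩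

lemma block_card (i : ℕ) : ({abC i, baC i, acC i, bcC i} : Finset Clause).card = 4 := by
  have h1 : abC i ∉ ({baC i, acC i, bcC i} : Finset Clause) := by
    simp [abC_ne_baC, abC_ne_acC, abC_ne_bcC]
  have h2 : baC i ∉ ({acC i, bcC i} : Finset Clause) := by
    simp [baC_ne_acC, baC_ne_bcC]
  have h3 : acC i ∉ ({bcC i} : Finset Clause) := by simp [acC_ne_bcC]
  rw [Finset.card_insert_of_notMem h1, Finset.card_insert_of_notMem h2,
    Finset.card_insert_of_notMem h3, Finset.card_singleton]

lemma PiN_card (n : ℕ) : (PiN n).card = 4 * n := by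
  rw [PiN, Finset.card_biUnion]
  · simp [block_card, mul_comm]
  · intro i _ j _ hij
    rw [Function.onFun, Finset.disjoint_left]
    intro c hci hcj
    simp only [Finset.mem_insert, Finset.mem_singleton] at hci hcj
    obtain ⟨⟨p, hp⟩, hi⟩ := block_vars hci
    obtain ⟨_, hj⟩ := block_vars hcj
    have := hi p hp
    have := hj p hp
    omega

lemma mem_delSet {n : ℕ} {f : Fin n → Bool} {c : Clause} :
    c ∈ delSet n f ↔ c ∈ PiN n ∧ ∀ i : Fin n, c ≠ (if f i then acC i.1 else bcC i.1) := by
  simp only [delSet, Finset.mem_sdiff, Finset.mem_image, Finset.mem_univ, true_and, not_exists]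
  constructor
  · rintro ⟨h1, h2⟩; exact ⟨h1, fun i hi => h2 i hi.symm⟩
  · rintro ⟨h1, h2⟩; exact ⟨h1, fun i hi => h2 i hi.symm⟩

lemma delSet_subset {n : ℕ} {f : Fin n → Bool} : delSet n f ⊆ PiN n := Finset.sdiff_subset

lemma abC_mem_delSet {n : ℕ} {f : Fin n → Bool} {i : ℕ} (hi : i < n) : abC i ∈ delSet n f := by
  rw [mem_delSet]
  refine ⟨mem_PiN.mpr ⟨i, hi, Or.inl rfl⟩, fun j => ?_⟩
  split <;> [exact abC_ne_acC; exact abC_ne_bcC]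

lemma baC_mem_delSet {n : ℕ} {f : Fin n → Bool} {i : ℕ} (hi : i < n) : baC i ∈ delSet n f := by
  rw [mem_delSet]
  refine ⟨mem_PiN.mpr ⟨i, hi, Or.inr (Or.inl rfl)⟩, fun j => ?_⟩
  split <;> [exact baC_ne_acC; exact baC_ne_bcC]

lemma acC_mem_delSet {n : ℕ} {f : Fin n → Bool} {i : Fin n} :
    acC i.1 ∈ delSet n f ↔ f i = false := by
  rw [mem_delSet]
  constructor
  · rintro ⟨-, h⟩
    have := h i
    by_contra hf
    rw [Bool.not_eq_false] at hf
    rw [if_pos hf] at this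
    exact this rfl
  · intro hf
    refine ⟨mem_PiN.mpr ⟨i.1, i.2, Or.inr (Or.inr (Or.inl rfl))⟩, fun j => ?_⟩
    by_cases hj : f j = true
    · rw [if_pos hj]
      intro h
      have : i = j := Fin.ext (acC_inj h)
      rw [this, hj] at hf; exact Bool.noConfusion hf
    · rw [if_neg hj]; exact acC_ne_bcC

lemma bcC_mem_delSet {n : ℕ} {f : Fin n → Bool} {i : Fin n} :
    bcC i.1 ∈ delSet n f ↔ f i = true := by
  rw [mem_delSet]
  constructor
  · rintro ⟨-, h⟩
    have := h i
    by_contra hf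
    rw [Bool.not_eq_true] at hf
    rw [if_neg (by simp [hf])] at this
    exact this rfl
  · intro hf
    refine ⟨mem_PiN.mpr ⟨i.1, i.2, Or.inr (Or.inr (Or.inr rfl))⟩, fun j => ?_⟩
    by_cases hj : f j = true
    · rw [if_pos hj]; exact fun h => acC_ne_bcC h.symm
    · rw [if_neg hj]
      intro h
      have : i = j := Fin.ext (bcC_inj h)
      rw [this] at hf; exact hj hf

end Aux2

section Aux3

lemma equiv_delSet (n : ℕ) (f : Fin n → Bool) : equivF (delSet n f) (PiN n) := by
  intro ω
  constructor
  · intro hω c hc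
    rcases mem_PiN.mp hc with ⟨i, hi, hcases⟩
    have hab := hω _ (abC_mem_delSet (f := f) hi)
    have hba := hω _ (baC_mem_delSet (f := f) hi)
    have heq := eq_of_ab_ba hab hba
    rcases hcases with rfl | rfl | rfl | rfl
    · exact hab
    · exact hba
    · by_cases hf : f ⟨i, hi⟩ = false
      · exact hω _ (acC_mem_delSet.mpr hf)
      · have hbcm : bcC i ∈ delSet n f := (bcC_mem_delSet (i := ⟨i, hi⟩)).mpr (by simp_all)
        have hbc := satC_bcC.mp (hω _ hbcm)
        rcases hbc with h | h
        · exact satC_acC.mpr (Or.inl (heq.trans h))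
        · exact satC_acC.mpr (Or.inr h)
    · by_cases hf : f ⟨i, hi⟩ = true
      · exact hω _ (bcC_mem_delSet.mpr hf)
      · have hacm : acC i ∈ delSet n f :=
          (acC_mem_delSet (i := ⟨i, hi⟩)).mpr (by simp_all)
        have hac := satC_acC.mp (hω _ hacm)
        rcases hac with h | h
        · exact satC_bcC.mpr (Or.inl (heq.symm.trans h))
        · exact satC_bcC.mpr (Or.inr h)
  · intro hω c hc
    exact hω c (delSet_subset hc)

lemma irred_delSet (n : ℕ) (f : Fin n → Bool) : irredundant (delSet n f) := by
  intro γ hγ hent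
  rcases mem_PiN.mp (delSet_subset hγ) with ⟨i, hi, hcases⟩
  have hsub : ∀ c : Clause, (delSet n f).erase c ⊆ PiN n :=
    fun c => (Finset.erase_subset _ _).trans delSet_subset
  rcases hcases with rfl | rfl | rfl | rfl
  · -- γ = abC i, use asg i false true true
    have hsat : satF (asg i false true true) ((delSet n f).erase (abC i)) := by
      refine satF_of_pattern (hsub _) ?_ ?_ ?_ ?_
      · intro h; exact absurd h (Finset.notMem_erase _ _)
      · intro _; exact Or.inl rfl
      · intro _; exact Or.inr rfl
      · intro _; exact Or.inl rfl
    have := satC_abC.mp (hent _ hsat)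
    rw [asg_a, asg_b] at this
    simp at this
  · -- γ = baC i, use asg i true false true
    have hsat : satF (asg i true false true) ((delSet n f).erase (baC i)) := by
      refine satF_of_pattern (hsub _) ?_ ?_ ?_ ?_
      · intro _; exact Or.inl rfl
      · intro h; exact absurd h (Finset.notMem_erase _ _)
      · intro _; exact Or.inl rfl
      · intro _; exact Or.inr rfl
    have := satC_baC.mp (hent _ hsat)
    rw [asg_a, asg_b] at this
    simp at this
  · -- γ = acC i, so f ⟨i,hi⟩ = false and bcC i ∉ delSet; use asg i false false false
    have hf : f ⟨i, hi⟩ = false := acC_mem_delSet.mp hγ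
    have hbc : bcC i ∉ delSet n f := fun h => by
      rw [bcC_mem_delSet (i := ⟨i, hi⟩)] at h; rw [hf] at h; exact Bool.noConfusion h
    have hsat : satF (asg i false false false) ((delSet n f).erase (acC i)) := by
      refine satF_of_pattern (hsub _) ?_ ?_ ?_ ?_
      · intro _; exact Or.inr rfl
      · intro _; exact Or.inl rfl
      · intro h; exact absurd h (Finset.notMem_erase _ _)
      · intro h; exact absurd (Finset.mem_of_mem_erase h) hbc
    have := satC_acC.mp (hent _ hsat)
    rw [asg_a, asg_c] at this
    simp at this
  · -- γ = bcC i, so f ⟨i,hi⟩ = true and acC i ∉ delSet; use asg i false false false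
    have hf : f ⟨i, hi⟩ = true := bcC_mem_delSet.mp hγ
    have hac : acC i ∉ delSet n f := fun h => by
      rw [acC_mem_delSet (i := ⟨i, hi⟩)] at h; rw [hf] at h; exact Bool.noConfusion h
    have hsat : satF (asg i false false false) ((delSet n f).erase (bcC i)) := by
      refine satF_of_pattern (hsub _) ?_ ?_ ?_ ?_
      · intro _; exact Or.inr rfl
      · intro _; exact Or.inl rfl
      · intro h; exact absurd (Finset.mem_of_mem_erase h) hac
      · intro h; exact absurd h (Finset.notMem_erase _ _)
    have := satC_bcC.mp (hent _ hsat)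
    rw [asg_b, asg_c] at this
    simp at this

lemma IES_delSet (n : ℕ) (f : Fin n → Bool) : IES (PiN n) (delSet n f) :=
  ⟨delSet_subset, equiv_delSet n f, irred_delSet n f⟩

end Aux3

section Aux4

lemma IES_is_delSet {n : ℕ} {Q : Finset Clause} (h : IES (PiN n) Q) :
    ∃ f : Fin n → Bool, Q = delSet n f := by
  obtain ⟨hsub, hequiv, hirr⟩ := h
  -- Step 1: abC i ∈ Q for all i < n
  have habQ : ∀ i < n, abC i ∈ Q := by
    intro i hi
    by_contra habs
    have hsat : satF (asg i false true true) Q := by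
      refine satF_of_pattern hsub ?_ ?_ ?_ ?_
      · intro h; exact absurd h habs
      · intro _; exact Or.inl rfl
      · intro _; exact Or.inr rfl
      · intro _; exact Or.inl rfl
    have := satC_abC.mp (((hequiv _).mp hsat) _ (mem_PiN.mpr ⟨i, hi, Or.inl rfl⟩))
    rw [asg_a, asg_b] at this
    simp at this
  -- Step 2: baC i ∈ Q for all i < n
  have hbaQ : ∀ i < n, baC i ∈ Q := by
    intro i hi
    by_contra habs
    have hsat : satF (asg i true false true) Q := by
      refine satF_of_pattern hsub ?_ ?_ ?_ ?_
      · intro _; exact Or.inl rfl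
      · intro h; exact absurd h habs
      · intro _; exact Or.inl rfl
      · intro _; exact Or.inr rfl
    have := satC_baC.mp (((hequiv _).mp hsat) _ (mem_PiN.mpr ⟨i, hi, Or.inr (Or.inl rfl)⟩))
    rw [asg_a, asg_b] at this
    simp at this
  -- Step 3: acC i ∈ Q or bcC i ∈ Q
  have horQ : ∀ i < n, acC i ∈ Q ∨ bcC i ∈ Q := by
    intro i hi
    by_contra habs
    push_neg at habs
    have hsat : satF (asg i false false false) Q := by
      refine satF_of_pattern hsub ?_ ?_ ?_ ?_
      · intro _; exact Or.inr rfl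
      · intro _; exact Or.inl rfl
      · intro h; exact absurd h habs.1
      · intro h; exact absurd h habs.2
    have := satC_acC.mp (((hequiv _).mp hsat) _
      (mem_PiN.mpr ⟨i, hi, Or.inr (Or.inr (Or.inl rfl))⟩))
    rw [asg_a, asg_c] at this
    simp at this
  -- Step 4: not both
  have hnotboth : ∀ i < n, ¬(acC i ∈ Q ∧ bcC i ∈ Q) := by
    rintro i hi ⟨hac, hbc⟩
    refine hirr (acC i) hac ?_
    intro ω hω
    have hab := hω _ (Finset.mem_erase.mpr ⟨abC_ne_acC, habQ i hi⟩)
    have hba := hω _ (Finset.mem_erase.mpr ⟨baC_ne_acC, hbaQ i hi⟩)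
    have hbc' := satC_bcC.mp (hω _ (Finset.mem_erase.mpr ⟨fun h => acC_ne_bcC h.symm, hbc⟩))
    have heq := eq_of_ab_ba hab hba
    rcases hbc' with h | h
    · exact satC_acC.mpr (Or.inl (heq.trans h))
    · exact satC_acC.mpr (Or.inr h)
  -- Define f
  refine ⟨fun i => if acC i.1 ∈ Q then false else true, ?_⟩
  ext c
  rw [mem_delSet]
  constructor
  · intro hc
    refine ⟨hsub hc, fun j => ?_⟩
    by_cases hj : acC j.1 ∈ Q
    · rw [if_neg (by simp [hj])]
      intro h
      rw [h] at hc
      exact hnotboth j.1 j.2 ⟨hj, hc⟩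
    · rw [if_pos (by simp [hj])]
      intro h
      rw [h] at hc
      exact hj hc
  · rintro ⟨hcP, hcond⟩
    rcases mem_PiN.mp hcP with ⟨i, hi, rfl | rfl | rfl | rfl⟩
    · exact habQ i hi
    · exact hbaQ i hi
    · by_contra hac
      have := hcond ⟨i, hi⟩
      rw [if_pos (by simp [hac])] at this
      exact this rfl
    · by_contra hbc
      have hac : acC i ∈ Q := (horQ i hi).resolve_right hbc
      have := hcond ⟨i, hi⟩
      rw [if_neg (by simp [hac])] at this
      exact this rfl

lemma delSet_injective (n : ℕ) : Function.Injective (delSet n) := by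
  intro f g h
  funext i
  have h1 : (bcC i.1 ∈ delSet n f) = (bcC i.1 ∈ delSet n g) := by rw [h]
  rw [eq_iff_iff, bcC_mem_delSet, bcC_mem_delSet] at h1
  cases hf : f i <;> cases hg : g i
  · rfl
  · rw [hf, hg] at h1; exact absurd (h1.mpr rfl) Bool.noConfusion
  · rw [hf, hg] at h1; exact absurd (h1.mp rfl) Bool.noConfusion
  · rfl

end Aux4


/-- Π_n has 4n clauses (over 3n variables) and exactly 2^n distinct IES's,
namely the sets delSet n f for the 2^n choice functions f (f ↦ delSet n f being injective). -/
theorem PiN_has_two_pow_IES (n : ℕ) (hn : 1 ≤ n) :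
    (PiN n).card = 4 * n ∧
      Function.Injective (delSet n) ∧
      ∀ Q, IES (PiN n) Q ↔ ∃ f : Fin n → Bool, Q = delSet n f := by
  refine ⟨PiN_card n, delSet_injective n, fun Q => ⟨IES_is_delSet, ?_⟩⟩
  rintro ⟨f, rfl⟩
  exact IES_delSet n f
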